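/- Perimeter formula for the standard double bubble: under the constraints θ₁ + θ₀ = 2π/3, θ₂ - θ₀ = 2π/3, r₀ sin θ₀ = r₁ sin θ₁ = r₂ sin θ₂, 1/r₁ = 1/r₂ + 1/r₀, and with m₁ = θ₁ r₁² + θ₀ r₀² - (√3/2) r₀ r₁ and m₂ = θ₂ r₂² - θ₀ r₀² + (√3/2) r₀ r₂, the total perimeter P = 2θ₁ r₁ + 2θ₂ r₂ + 2θ₀ r₀ satisfies P = 2(m₁/r₁ + m₂/r₂). -/

import Mathlib

open Real Set

/-- Perimeter formula for the standard double bubble: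
P = 2(m₁/r₁ + m₂/r₂). -/
theorem stmt17 (θ₀ θ₁ θ₂ r₀ r₁ r₂ m₁ m₂ P : ℝ)
    (hθ₀ : θ₀ ∈ Set.Ioo 0 (π/3)) (hθ₁ : θ₁ ∈ Set.Ioo (π/3) (2*π/3))
    (hθ₂ : θ₂ ∈ Set.Ioo (2*π/3) π)
    (h0 : 0 < r₀) (h1 : 0 < r₁) (h2 : 0 < r₂)
    (ha : θ₁ + θ₀ = 2*π/3) (hb : θ₂ - θ₀ = 2*π/3)
    (hc : r₀ * Real.sin θ₀ = r₁ * Real.sin θ₁)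
    (hd : r₀ * Real.sin θ₀ = r₂ * Real.sin θ₂)
    (he : 1/r₁ = 1/r₂ + 1/r₀)
    (hm1 : m₁ = θ₁*r₁^2 + θ₀*r₀^2 - (Real.sqrt 3/2)*r₀*r₁)
    (hm2 : m₂ = θ₂*r₂^2 - θ₀*r₀^2 + (Real.sqrt 3/2)*r₀*r₂)
    (hP : P = 2*θ₁*r₁ + 2*θ₂*r₂ + 2*θ₀*r₀) :
    P = 2*(m₁/r₁ + m₂/r₂) := by
  have key : r₀ * r₂ = r₁ * r₂ + r₁ * r₀ := by
    field_simp at he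
    linarith
  subst hm1 hm2 hP
  field_simp
  linear_combination (-2*θ₀*r₀) * key
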